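/- arXiv:2202.03357 — 5 statements merged into one kernel-verified Lean document; each statement's English description precedes it below -/
import Mathlib

section
/- Let (X, μ) be a probability space and f : X → ℝ a measurable function with f ≥ 0 almost everywhere, ∫ f dμ = 1, and f·log f integrable. Then ∫ f log f dμ = 0 if and only if f = 1 μ-almost everywhere. -/
open MeasureTheory

lemma aux_nonneg (x : ℝ) (hx : 0 ≤ x) : 0 ≤ x * Real.log x - x + 1 := by
  rcases eq_or_lt_of_le hx with h | h
  · simp [← h]
  · have h1 : Real.log x⁻¹ ≤ x⁻¹ - 1 := Real.log_le_sub_one_of_pos (by positivity)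
    rw [Real.log_inv] at h1
    have hx' : 0 < x⁻¹ := by positivity
    nlinarith [mul_le_mul_of_nonneg_left h1 hx, mul_inv_cancel₀ (ne_of_gt h)]

lemma aux_eq (x : ℝ) (hx : 0 ≤ x) (h0 : x * Real.log x - x + 1 = 0) : x = 1 := by
  by_contra hne
  rcases eq_or_lt_of_le hx with h | h
  · simp [← h] at h0
  · have hinv : x⁻¹ ≠ 1 := by
      intro hh; exact hne (by field_simp at hh; simpa using hh.symm)
    have h1 : Real.log x⁻¹ < x⁻¹ - 1 :=
      Real.log_lt_sub_one_of_pos (by positivity) hinv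
    rw [Real.log_inv] at h1
    nlinarith [mul_lt_mul_of_pos_left h1 h, mul_inv_cancel₀ (ne_of_gt h)]

/-- If `f ≥ 0` a.e. with `∫ f dμ = 1` on a probability space, then
`∫ f log f dμ = 0` iff `f = 1` a.e. -/
theorem integral_mul_log_eq_zero_iff {X : Type*} [MeasurableSpace X]
    (μ : Measure X) [IsProbabilityMeasure μ]
    (f : X → ℝ) (hf : Measurable f) (hf0 : 0 ≤ᵐ[μ] f)
    (hf1 : ∫ x, f x ∂μ = 1)
    (hint : Integrable (fun x => f x * Real.log (f x)) μ) :
    ∫ x, f x * Real.log (f x) ∂μ = 0 ↔ f =ᵐ[μ] (fun _ => 1) := by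
  have hfint : Integrable f μ := by
    by_contra hni
    rw [integral_undef hni] at hf1
    norm_num at hf1
  constructor
  · intro hI
    set g : X → ℝ := fun x => f x * Real.log (f x) - f x + 1 with hg
    have hgint : Integrable g μ := by
      exact (hint.sub hfint).add (integrable_const 1)
    have hg0 : 0 ≤ᵐ[μ] g := hf0.mono fun x hx => aux_nonneg _ hx
    have h2 : Integrable (fun x => f x * Real.log (f x) - f x) μ := hint.sub hfint
    have hgI : ∫ x, g x ∂μ = 0 := by
      rw [hg]
      simp only
      rw [integral_add h2 (integrable_const 1), integral_sub hint hfint, hI, hf1]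
      simp
    have : g =ᵐ[μ] 0 :=
      (integral_eq_zero_iff_of_nonneg_ae hg0 hgint).mp hgI
    filter_upwards [this, hf0] with x hx hx0
    exact aux_eq _ hx0 hx
  · intro h
    have : (fun x => f x * Real.log (f x)) =ᵐ[μ] 0 := by
      filter_upwards [h] with x hx
      simp [hx]
    rw [integral_congr_ae this]
    simp
end

section
/- Let μ be a probability measure and ν a finite measure on a measurable space X, and let λ > 0 be a real number such that λ • μ ≤ ν (that is, λ·μ(A) ≤ ν(A) for every measurable set A). Then klDiv μ ν ≤ -log λ (as extended real numbers). This is the commutative form of the bound S(φ‖φ∘ε) ≤ log[A:B]_ε obtained from the Pimsner–Popa inequality. -/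
open MeasureTheory

open scoped Classical in
/-- The Kullback–Leibler divergence of the measure `μ` with respect to the measure `ν`,
as in Mathlib's `InformationTheory.klDiv`. -/
noncomputable def klDiv {X : Type*} [MeasurableSpace X] (μ ν : Measure X) : EReal :=
  if μ ≪ ν ∧ Integrable (llr μ ν) μ then ((∫ x, llr μ ν x ∂μ : ℝ) : EReal) else ⊤

/-- If `l • μ ≤ ν` with `l > 0`, then `klDiv μ ν ≤ -log l`: the commutative form of the
bound `S(φ‖φ∘ε) ≤ log [A:B]_ε` obtained from the Pimsner–Popa inequality. -/
theorem klDiv_le_neg_log_of_smul_le {X : Type*} [MeasurableSpace X]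
    (μ ν : Measure X) [IsProbabilityMeasure μ] [IsFiniteMeasure ν]
    (l : ℝ) (hl : 0 < l) (h : ENNReal.ofReal l • μ ≤ ν) :
    klDiv μ ν ≤ ((-Real.log l : ℝ) : EReal) := by
  have hl0 : ENNReal.ofReal l ≠ 0 := by simp [ENNReal.ofReal_eq_zero, not_le, hl]
  -- absolute continuity
  have hac : μ ≪ ν := by
    intro s hs
    have h1 : (ENNReal.ofReal l • μ) s ≤ ν s := h s
    rw [hs] at h1
    simp only [Measure.smul_apply, smul_eq_mul, le_zero_iff, mul_eq_zero] at h1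
    exact h1.resolve_left hl0
  set f := μ.rnDeriv ν with hf
  -- a.e. ν bound on the Radon–Nikodym derivative
  have h1 : (ENNReal.ofReal l • μ).rnDeriv ν ≤ᵐ[ν] 1 := Measure.rnDeriv_le_one_of_le h
  have h2 : (ENNReal.ofReal l • μ).rnDeriv ν =ᵐ[ν] ENNReal.ofReal l • μ.rnDeriv ν :=
    Measure.rnDeriv_smul_left_of_ne_top μ ν ENNReal.ofReal_ne_top
  have hbound : ∀ᵐ x ∂ν, f x ≤ ENNReal.ofReal l⁻¹ := by
    filter_upwards [h1, h2] with x hx1 hx2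
    rw [hx2] at hx1
    simp only [Pi.smul_apply, smul_eq_mul, Pi.one_apply] at hx1
    rw [ENNReal.ofReal_inv_of_pos hl]
    exact ENNReal.le_inv_iff_mul_le.mpr (by rwa [mul_comm])
  have hlt : ∀ᵐ x ∂ν, f x < ⊤ := Measure.rnDeriv_lt_top μ ν
  have hbound' : ∀ᵐ x ∂ν, (f x).toReal ≤ l⁻¹ := by
    filter_upwards [hbound] with x hx
    calc (f x).toReal ≤ (ENNReal.ofReal l⁻¹).toReal := by
          exact ENNReal.toReal_mono ENNReal.ofReal_ne_top hx
      _ = l⁻¹ := ENNReal.toReal_ofReal (by positivity)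
  -- bound on llr a.e. μ
  have hpos : ∀ᵐ x ∂μ, 0 < f x := Measure.rnDeriv_pos hac
  have hltμ : ∀ᵐ x ∂μ, f x < ⊤ := hac.ae_le hlt
  have hboundμ : ∀ᵐ x ∂μ, (f x).toReal ≤ l⁻¹ := hac.ae_le hbound'
  have hllr_bound : ∀ᵐ x ∂μ, llr μ ν x ≤ -Real.log l := by
    filter_upwards [hpos, hltμ, hboundμ] with x h0 hfin hle
    have h0' : 0 < (f x).toReal := ENNReal.toReal_pos h0.ne' hfin.ne
    calc llr μ ν x = Real.log (f x).toReal := rfl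
      _ ≤ Real.log l⁻¹ := Real.log_le_log h0' hle
      _ = -Real.log l := Real.log_inv l
  -- integrability of llr
  obtain ⟨C, hC⟩ : ∃ C, ∀ t ∈ Set.Icc (0:ℝ) l⁻¹, ‖t * Real.log t‖ ≤ C :=
    isCompact_Icc.exists_bound_of_continuousOn Real.continuous_mul_log.continuousOn
  have h_int : Integrable (llr μ ν) μ := by
    have hmeas : Measurable f := μ.measurable_rnDeriv ν
    have key : Integrable (llr μ ν) (ν.withDensity f) := by
      rw [integrable_withDensity_iff hmeas hlt]
      refine Integrable.mono' (integrable_const C)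
        ((measurable_llr μ ν).mul (hmeas.ennreal_toReal)).aestronglyMeasurable ?_
      filter_upwards [hbound'] with x hx
      have := hC (f x).toReal ⟨ENNReal.toReal_nonneg, hx⟩
      calc ‖llr μ ν x * (f x).toReal‖ = ‖(f x).toReal * Real.log (f x).toReal‖ := by
            rw [mul_comm]; rfl
        _ ≤ C := this
    rwa [Measure.withDensity_rnDeriv_eq μ ν hac] at key
  -- conclude
  have h_integral : ∫ x, llr μ ν x ∂μ ≤ -Real.log l := by
    calc ∫ x, llr μ ν x ∂μ ≤ ∫ _, -Real.log l ∂μ :=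
          integral_mono_ae h_int (integrable_const _) hllr_bound
      _ = -Real.log l := by simp
  rw [klDiv, if_pos ⟨hac, h_int⟩]
  exact_mod_cast h_integral
end

section
/- Let σ and ρ be n×n positive definite density matrices. Then Tr(σ · (log σ - log ρ)) is a real number and Tr(σ · (log σ - log ρ)) ≥ 0, with equality if and only if σ = ρ (nonnegativity of the relative entropy S(φ‖ψ) and its vanishing exactly for equal states, in the matrix case). -/
open scoped ComplexOrder

private lemma klein_scalar {p q : ℝ} (hp : 0 < p) (hq : 0 < q) :
    p - q ≤ p * Real.log p - p * Real.log q := by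
  have h := Real.log_le_sub_one_of_pos (div_pos hq hp)
  rw [Real.log_div hq.ne' hp.ne'] at h
  have h2 : p * (Real.log q - Real.log p) ≤ p * (q / p - 1) :=
    mul_le_mul_of_nonneg_left h hp.le
  have h3 : p * (q / p - 1) = q - p := by field_simp
  nlinarith [h2, h3]

private lemma klein_scalar_strict {p q : ℝ} (hp : 0 < p) (hq : 0 < q) (hne : p ≠ q) :
    p - q < p * Real.log p - p * Real.log q := by
  have hne' : q / p ≠ 1 := by
    intro hc
    exact hne ((div_eq_one_iff_eq hp.ne').mp hc).symm
  have h := Real.log_lt_sub_one_of_pos (div_pos hq hp) hne'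
  rw [Real.log_div hq.ne' hp.ne'] at h
  have h2 : p * (Real.log q - Real.log p) < p * (q / p - 1) :=
    mul_lt_mul_of_pos_left h hp
  have h3 : p * (q / p - 1) = q - p := by field_simp
  nlinarith [h2, h3]

private lemma trace_conj {m : Type*} [Fintype m] [DecidableEq m]
    (U A : Matrix m m ℂ) (h : star U * U = 1) :
    (U * A * star U).trace = A.trace := by
  rw [Matrix.trace_mul_cycle, h, Matrix.one_mul]

private lemma conj_mul_conj {m : Type*} [Fintype m] [DecidableEq m]
    (U V A B : Matrix m m ℂ) (hU : U * star U = 1) :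
    (U * A * star U) * (V * B * star V)
      = U * (A * ((star U * V) * B * star (star U * V))) * star U := by
  simp only [star_mul, star_star, Matrix.mul_assoc, hU, Matrix.mul_one]

private lemma trace_diag_conj {m : Type*} [Fintype m] [DecidableEq m]
    (d e : m → ℂ) (W : Matrix m m ℂ) :
    (Matrix.diagonal d * (W * Matrix.diagonal e * star W)).trace
      = ∑ i, ∑ j, d i * e j * (W i j * star (W i j)) := by
  rw [Matrix.trace]
  refine Finset.sum_congr rfl fun i _ => ?_
  rw [Matrix.diag_apply, Matrix.diagonal_mul, Matrix.mul_apply, Finset.mul_sum]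
  refine Finset.sum_congr rfl fun j _ => ?_
  rw [Matrix.mul_diagonal, Matrix.star_apply]
  ring

/-- For positive definite density matrices `σ, ρ`, the relative entropy
`Tr(σ (log σ - log ρ))` is a real number, is nonnegative, and vanishes iff `σ = ρ`.
Here `log` is applied through the Hermitian functional calculus. -/
theorem matrix_relEntropy_nonneg {n : ℕ}
    (σ ρ : Matrix (Fin n) (Fin n) ℂ) (hσ : σ.PosDef) (hρ : ρ.PosDef)
    (hσt : σ.trace = 1) (hρt : ρ.trace = 1) :
    ∃ r : ℝ, (σ * (hσ.1.cfc Real.log - hρ.1.cfc Real.log)).trace = (r : ℂ)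
      ∧ 0 ≤ r ∧ (r = 0 ↔ σ = ρ) := by
  classical
  set U : Matrix (Fin n) (Fin n) ℂ := (hσ.1.eigenvectorUnitary : Matrix (Fin n) (Fin n) ℂ) with hU_def
  set V : Matrix (Fin n) (Fin n) ℂ := (hρ.1.eigenvectorUnitary : Matrix (Fin n) (Fin n) ℂ) with hV_def
  set p : Fin n → ℝ := hσ.1.eigenvalues with hp_def
  set q : Fin n → ℝ := hρ.1.eigenvalues with hq_def
  have hσspec : σ = U * Matrix.diagonal (RCLike.ofReal ∘ p) * star U := hσ.1.spectral_theorem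
  have hρspec : ρ = V * Matrix.diagonal (RCLike.ofReal ∘ q) * star V := hρ.1.spectral_theorem
  have hUU : star U * U = 1 := Matrix.mem_unitaryGroup_iff'.mp (hσ.1.eigenvectorUnitary).2
  have hUU' : U * star U = 1 := Matrix.mem_unitaryGroup_iff.mp (hσ.1.eigenvectorUnitary).2
  have hVV : star V * V = 1 := Matrix.mem_unitaryGroup_iff'.mp (hρ.1.eigenvectorUnitary).2
  have hVV' : V * star V = 1 := Matrix.mem_unitaryGroup_iff.mp (hρ.1.eigenvectorUnitary).2
  set W : Matrix (Fin n) (Fin n) ℂ := star U * V with hW_def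
  have hWW : W * star W = 1 := by
    rw [hW_def, star_mul, star_star, Matrix.mul_assoc, ← Matrix.mul_assoc V, hVV',
      Matrix.one_mul, hUU]
  have hWW' : star W * W = 1 := by
    rw [hW_def, star_mul, star_star, Matrix.mul_assoc, ← Matrix.mul_assoc U, hUU',
      Matrix.one_mul, hVV]
  have hp_pos : ∀ i, 0 < p i := fun i => hσ.eigenvalues_pos i
  have hq_pos : ∀ i, 0 < q i := fun i => hρ.eigenvalues_pos i
  -- row and column sums of |W i j|^2
  have hrow : ∀ i, ∑ j, Complex.normSq (W i j) = 1 := by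
    intro i
    have h1 : (W * star W) i i = 1 := by rw [hWW]; simp
    rw [Matrix.mul_apply] at h1
    simp only [Matrix.star_apply, Complex.star_def, Complex.mul_conj] at h1
    exact_mod_cast h1
  have hcol : ∀ j, ∑ i, Complex.normSq (W i j) = 1 := by
    intro j
    have h1 : (star W * W) j j = 1 := by rw [hWW']; simp
    rw [Matrix.mul_apply] at h1
    simp only [Matrix.star_apply, Complex.star_def] at h1
    have h2 : ∀ i, (starRingEnd ℂ) (W i j) * W i j = (Complex.normSq (W i j) : ℂ) := by
      intro i; rw [mul_comm, Complex.mul_conj]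
    rw [Finset.sum_congr rfl fun i _ => h2 i] at h1
    exact_mod_cast h1
  -- sum of eigenvalues = 1
  have hofReal : (RCLike.ofReal : ℝ → ℂ) = Complex.ofReal := rfl
  have hp1 : ∑ i, p i = 1 := by
    have h := hσt
    rw [hσspec, trace_conj _ _ hUU, Matrix.trace_diagonal] at h
    simp only [Function.comp_apply, hofReal] at h
    exact_mod_cast h
  have hq1 : ∑ j, q j = 1 := by
    have h := hρt
    rw [hρspec, trace_conj _ _ hVV, Matrix.trace_diagonal] at h
    simp only [Function.comp_apply, hofReal] at h
    exact_mod_cast h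
  have hcfcσ : hσ.1.cfc Real.log
      = U * Matrix.diagonal (Complex.ofReal ∘ Real.log ∘ p) * star U := rfl
  have hcfcρ : hρ.1.cfc Real.log
      = V * Matrix.diagonal (Complex.ofReal ∘ Real.log ∘ q) * star V := rfl
  -- the two traces
  have t1 : (σ * hσ.1.cfc Real.log).trace = ((∑ i, p i * Real.log (p i) : ℝ) : ℂ) := by
    nth_rewrite 1 [hσspec]
    rw [hcfcσ, conj_mul_conj _ _ _ _ hUU', trace_conj _ _ hUU, hUU]
    simp only [Matrix.one_mul, star_one, Matrix.mul_one, Matrix.diagonal_mul_diagonal,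
      Matrix.trace_diagonal, Function.comp_apply]
    push_cast
    rfl
  have t2 : (σ * hρ.1.cfc Real.log).trace
      = ((∑ i, ∑ j, Complex.normSq (W i j) * (p i * Real.log (q j)) : ℝ) : ℂ) := by
    nth_rewrite 1 [hσspec]
    rw [hcfcρ, conj_mul_conj _ _ _ _ hUU', trace_conj _ _ hUU, ← hW_def, trace_diag_conj]
    push_cast
    refine Finset.sum_congr rfl fun i _ => Finset.sum_congr rfl fun j _ => ?_
    rw [Complex.star_def, Complex.mul_conj]
    simp only [Function.comp_apply, hofReal, ← hp_def, ← hq_def, ← hW_def]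
    ring
  -- the real number
  set r : ℝ := (∑ i, p i * Real.log (p i))
      - ∑ i, ∑ j, Complex.normSq (W i j) * (p i * Real.log (q j)) with hr_def
  have htr : (σ * (hσ.1.cfc Real.log - hρ.1.cfc Real.log)).trace = (r : ℂ) := by
    rw [Matrix.mul_sub, Matrix.trace_sub, t1, t2, hr_def]
    push_cast
    ring
  -- rewrite r as a sum of nonnegative terms
  set g : Fin n → Fin n → ℝ := fun i j => Complex.normSq (W i j)
      * (p i * Real.log (p i) - p i * Real.log (q j) - (p i - q j)) with hg_def
  have hg_nonneg : ∀ i j, 0 ≤ g i j := by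
    intro i j
    have := klein_scalar (hp_pos i) (hq_pos j)
    have h0 := Complex.normSq_nonneg (W i j)
    rw [hg_def]
    have : 0 ≤ p i * Real.log (p i) - p i * Real.log (q j) - (p i - q j) := by linarith
    positivity
  have A1 : ∑ i, ∑ j, Complex.normSq (W i j) * (p i * Real.log (p i))
      = ∑ i, p i * Real.log (p i) := by
    refine Finset.sum_congr rfl fun i _ => ?_
    rw [← Finset.sum_mul, hrow i, one_mul]
  have A2 : ∑ i, ∑ j, Complex.normSq (W i j) * p i = 1 := by
    rw [Finset.sum_congr rfl fun i (_ : i ∈ Finset.univ) => by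
      rw [← Finset.sum_mul, hrow i, one_mul]]
    exact hp1
  have A3 : ∑ i, ∑ j, Complex.normSq (W i j) * q j = 1 := by
    rw [Finset.sum_comm]
    rw [Finset.sum_congr rfl fun j (_ : j ∈ Finset.univ) => by
      rw [← Finset.sum_mul, hcol j, one_mul]]
    exact hq1
  have hrS : ∑ i, ∑ j, g i j = r := by
    have hexp : ∀ i j, g i j = Complex.normSq (W i j) * (p i * Real.log (p i))
        - Complex.normSq (W i j) * (p i * Real.log (q j))
        - (Complex.normSq (W i j) * p i - Complex.normSq (W i j) * q j) := by
      intro i j; rw [hg_def]; ring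
    simp only [hexp, Finset.sum_sub_distrib]
    rw [A1, A2, A3, hr_def]
    ring
  have hr_nonneg : 0 ≤ r := by
    rw [← hrS]
    exact Finset.sum_nonneg fun i _ => Finset.sum_nonneg fun j _ => hg_nonneg i j
  refine ⟨r, htr, hr_nonneg, ?_, ?_⟩
  · -- r = 0 → σ = ρ
    intro hr0
    have hall : ∀ i j, g i j = 0 := by
      have h := (Finset.sum_eq_zero_iff_of_nonneg fun i _ =>
        Finset.sum_nonneg fun j _ => hg_nonneg i j).mp (hrS.trans hr0)
      intro i j
      exact (Finset.sum_eq_zero_iff_of_nonneg fun j _ => hg_nonneg i j).mp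
        (h i (Finset.mem_univ i)) j (Finset.mem_univ j)
    have key : ∀ i j, W i j ≠ 0 → p i = q j := by
      intro i j hWij
      by_contra hne
      have hc : 0 < Complex.normSq (W i j) := Complex.normSq_pos.mpr hWij
      have hs := klein_scalar_strict (hp_pos i) (hq_pos j) hne
      have hgz : Complex.normSq (W i j)
          * (p i * Real.log (p i) - p i * Real.log (q j) - (p i - q j)) = 0 := by
        simpa [hg_def] using hall i j
      nlinarith [mul_pos hc (by linarith : (0:ℝ) < p i * Real.log (p i) - p i * Real.log (q j) - (p i - q j))]
    have hDW : Matrix.diagonal (Complex.ofReal ∘ p) * W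
        = W * Matrix.diagonal (Complex.ofReal ∘ q) := by
      ext i j
      rw [Matrix.diagonal_mul, Matrix.mul_diagonal]
      by_cases h : W i j = 0
      · simp [h]
      · rw [Function.comp_apply, Function.comp_apply, key i j h, mul_comm]
    have hσV : σ * V = V * Matrix.diagonal (Complex.ofReal ∘ q) := by
      conv_lhs => rw [hσspec]
      have h1 : (U * Matrix.diagonal (RCLike.ofReal ∘ p) * star U) * V
          = U * (Matrix.diagonal (Complex.ofReal ∘ p) * W) := by
        rw [hW_def]
        simp only [Matrix.mul_assoc]
        rfl
      rw [h1, hDW, hW_def, ← Matrix.mul_assoc, ← Matrix.mul_assoc, hUU', Matrix.one_mul]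
    calc σ = σ * (V * star V) := by rw [hVV', Matrix.mul_one]
      _ = σ * V * star V := by rw [Matrix.mul_assoc]
      _ = V * Matrix.diagonal (Complex.ofReal ∘ q) * star V := by rw [hσV]
      _ = ρ := hρ.1.spectral_theorem.symm
  · -- σ = ρ → r = 0
    intro h
    subst h
    have hcfc_eq : hσ.1.cfc Real.log = hρ.1.cfc Real.log := rfl
    rw [hcfc_eq, sub_self, Matrix.mul_zero, Matrix.trace_zero] at htr
    exact_mod_cast htr.symm
end

section
/- Let m, n ≥ 1 and let σ be a density matrix indexed by Fin m × Fin n, with partial traces σ₁ and σ₂. Then H(σ) ≤ H(σ₁) + H(σ₂) (subadditivity of von Neumann entropy; equivalently, S_τ(φ|_A) + S_vN(φ|_{M_n}) - S_τ(φ) ≥ log n for a state φ on A ⊗ M_n with A = M_m). -/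
open scoped ComplexOrder
open scoped Matrix

private lemma sum_swap' {α β : Type*} [Fintype α] [Fintype β] (f : α → β → ℂ) :
    ∑ a, ∑ b, f a b = ∑ b, ∑ a, f a b := Finset.sum_comm


lemma klein_core {ι κ : Type*} [Fintype ι] [Fintype κ] (p : ι → ℝ) (q : κ → ℝ) (c : ι → κ → ℝ)
    (hp : ∀ i, 0 ≤ p i) (hq : ∀ j, 0 ≤ q j) (hc : ∀ i j, 0 ≤ c i j)
    (hrow : ∀ i, ∑ j, c i j = 1) (hcol : ∀ j, ∑ i, c i j ≤ 1)
    (hps : ∑ i, p i = 1) (hqs : ∑ j, q j ≤ 1)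
    (hsupp : ∀ i j, 0 < p i → q j = 0 → c i j = 0) :
    -∑ i, p i * Real.log (p i) ≤ -∑ i, ∑ j, p i * c i j * Real.log (q j) := by
  have hterm : ∀ i j, p i * c i j * (Real.log (q j) - Real.log (p i))
      ≤ c i j * q j - p i * c i j := by
    intro i j
    rcases eq_or_lt_of_le (hp i) with h0 | hpi
    · rw [← h0]; simpa using mul_nonneg (hc i j) (hq j)
    rcases eq_or_lt_of_le (hc i j) with h0 | hci
    · rw [← h0]; simp
    have hqj : 0 < q j := by
      rcases eq_or_lt_of_le (hq j) with h0 | h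
      · exact absurd (hsupp i j hpi h0.symm) (ne_of_gt hci)
      · exact h
    have hlog : Real.log (q j) - Real.log (p i) ≤ q j / p i - 1 := by
      rw [← Real.log_div (ne_of_gt hqj) (ne_of_gt hpi)]
      exact Real.log_le_sub_one_of_pos (div_pos hqj hpi)
    calc p i * c i j * (Real.log (q j) - Real.log (p i))
        ≤ p i * c i j * (q j / p i - 1) := by
          exact mul_le_mul_of_nonneg_left hlog (by positivity)
      _ = c i j * q j - p i * c i j := by field_simp
  have key : ∑ i, ∑ j, p i * c i j * (Real.log (q j) - Real.log (p i)) ≤ 0 := by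
    calc ∑ i, ∑ j, p i * c i j * (Real.log (q j) - Real.log (p i))
        ≤ ∑ i, ∑ j, (c i j * q j - p i * c i j) :=
          Finset.sum_le_sum fun i _ => Finset.sum_le_sum fun j _ => hterm i j
      _ = ∑ j, q j * ∑ i, c i j - ∑ i, p i * ∑ j, c i j := by
          simp only [Finset.sum_sub_distrib]
          congr 1
          · rw [Finset.sum_comm]
            simp [Finset.mul_sum, mul_comm]
          · simp [Finset.mul_sum]
      _ ≤ ∑ j, q j - 1 := by
          apply sub_le_sub
          · apply Finset.sum_le_sum fun j _ => ?_
            calc q j * ∑ i, c i j ≤ q j * 1 :=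
                mul_le_mul_of_nonneg_left (hcol j) (hq j)
              _ = q j := mul_one _
          · have : ∑ i, p i * ∑ j, c i j = ∑ i, p i := by
              apply Finset.sum_congr rfl; intro i _; rw [hrow i, mul_one]
            rw [this, hps]
      _ ≤ 0 := by linarith
  have expand : ∑ i, p i * Real.log (p i) = ∑ i, ∑ j, p i * c i j * Real.log (p i) := by
    apply Finset.sum_congr rfl; intro i _
    rw [← Finset.sum_mul, ← Finset.mul_sum, hrow i, mul_one]
  have := key
  simp only [mul_sub, Finset.sum_sub_distrib] at this
  rw [expand]
  linarith

private lemma trace_eq_sum_eigen {N : Type*} [Fintype N] [DecidableEq N] (A : Matrix N N ℂ)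
    (hh : A.IsHermitian) : A.trace = ((∑ i, hh.eigenvalues i : ℝ) : ℂ) := by
  conv_lhs => rw [hh.spectral_theorem]
  rw [Unitary.conjStarAlgAut_apply, Matrix.trace_mul_cycle, (Unitary.mem_iff.mp hh.eigenvectorUnitary.2).1,
    one_mul, Matrix.trace_diagonal]
  push_cast
  simp [Function.comp]

private lemma sum_rot {α β γ : Type*} [Fintype α] [Fintype β] [Fintype γ] (f : α → β → γ → ℂ) :
    ∑ a, ∑ b, ∑ c, f a b c = ∑ b, ∑ c, ∑ a, f a b c := by
  rw [Finset.sum_comm]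
  exact Finset.sum_congr rfl fun b _ => Finset.sum_comm

noncomputable def vNEntropy {n : Type*} [Fintype n] [DecidableEq n]
    (σ : Matrix n n ℂ) : ℝ :=
  if h : σ.IsHermitian then -∑ i, h.eigenvalues i * Real.log (h.eigenvalues i) else 0

/-- Subadditivity of the von Neumann entropy: `H(σ) ≤ H(σ₁) + H(σ₂)` where `σ₁, σ₂` are
the partial traces of the density matrix `σ` on `M_m ⊗ M_n`. -/
theorem vNEntropy_subadditive {m n : ℕ} (hm : 1 ≤ m) (hn : 1 ≤ n)
    (σ : Matrix (Fin m × Fin n) (Fin m × Fin n) ℂ) (hσ : σ.PosSemidef) (htr : σ.trace = 1) :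
    vNEntropy σ ≤
      vNEntropy (Matrix.of fun i j => ∑ k, σ (i, k) (j, k))
        + vNEntropy (Matrix.of fun k l => ∑ i, σ (i, k) (i, l)) := by
  set τ₁ : Matrix (Fin m) (Fin m) ℂ := Matrix.of fun i j => ∑ k, σ (i, k) (j, k) with hτ₁
  set τ₂ : Matrix (Fin n) (Fin n) ℂ := Matrix.of fun k l => ∑ i, σ (i, k) (i, l) with hτ₂
  obtain ⟨B, hB⟩ : ∃ B, σ = Bᴴ * B := by
    open scoped MatrixOrder in exact CStarAlgebra.nonneg_iff_eq_star_mul_self.mp hσ.nonneg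
  have h1 : τ₁.PosSemidef := by
    have : τ₁ = (Matrix.of fun (bk : (Fin m × Fin n) × Fin n) (i : Fin m) => B bk.1 (i, bk.2))ᴴ
        * (Matrix.of fun (bk : (Fin m × Fin n) × Fin n) (i : Fin m) => B bk.1 (i, bk.2)) := by
      ext i j
      simp only [hτ₁, hB, Matrix.mul_apply, Matrix.of_apply, Matrix.conjTranspose_apply,
        Fintype.sum_prod_type]
      exact sum_rot (fun t b1 b2 => star (B (b1, b2) (i, t)) * B (b1, b2) (j, t))
    rw [this]
    exact Matrix.posSemidef_conjTranspose_mul_self _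
  have h2 : τ₂.PosSemidef := by
    have : τ₂ = (Matrix.of fun (bi : (Fin m × Fin n) × Fin m) (k : Fin n) => B bi.1 (bi.2, k))ᴴ
        * (Matrix.of fun (bi : (Fin m × Fin n) × Fin m) (k : Fin n) => B bi.1 (bi.2, k)) := by
      ext k l
      simp only [hτ₂, hB, Matrix.mul_apply, Matrix.of_apply, Matrix.conjTranspose_apply,
        Fintype.sum_prod_type]
      exact sum_rot (fun t b1 b2 => star (B (b1, b2) (t, k)) * B (b1, b2) (t, l))
    rw [this]
    exact Matrix.posSemidef_conjTranspose_mul_self _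
  have hA := hσ.1
  rw [vNEntropy, vNEntropy, vNEntropy, dif_pos hA, dif_pos h1.1, dif_pos h2.1]
  set p : (Fin m × Fin n) → ℝ := hA.eigenvalues with hpdef
  set a : Fin m → ℝ := h1.1.eigenvalues with hadef
  set b : Fin n → ℝ := h2.1.eigenvalues with hbdef
  set U : Matrix (Fin m × Fin n) (Fin m × Fin n) ℂ := (hA.eigenvectorUnitary : Matrix (Fin m × Fin n) (Fin m × Fin n) ℂ) with hUdef
  set V : Matrix (Fin m) (Fin m) ℂ := (h1.1.eigenvectorUnitary : Matrix (Fin m) (Fin m) ℂ) with hVdef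
  set W : Matrix (Fin n) (Fin n) ℂ := (h2.1.eigenvectorUnitary : Matrix (Fin n) (Fin n) ℂ) with hWdef
  have hU1 : star U * U = 1 := (Unitary.mem_iff.mp hA.eigenvectorUnitary.2).1
  have hU2 : U * star U = 1 := (Unitary.mem_iff.mp hA.eigenvectorUnitary.2).2
  have hV1 : star V * V = 1 := (Unitary.mem_iff.mp h1.1.eigenvectorUnitary.2).1
  have hV2 : V * star V = 1 := (Unitary.mem_iff.mp h1.1.eigenvectorUnitary.2).2
  have hW1 : star W * W = 1 := (Unitary.mem_iff.mp h2.1.eigenvectorUnitary.2).1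
  have hW2 : W * star W = 1 := (Unitary.mem_iff.mp h2.1.eigenvectorUnitary.2).2
  set P : Matrix (Fin m × Fin n) (Fin m × Fin n) ℂ :=
    Matrix.of (fun β x => V β.1 x.1 * W β.2 x.2) with hPdef
  have hP1 : star P * P = 1 := by
    ext x y
    have e1 := congrFun (congrFun hV1 x.1) y.1
    have e2 := congrFun (congrFun hW1 x.2) y.2
    simp only [Matrix.mul_apply, Matrix.conjTranspose_apply, Matrix.star_apply,
      Matrix.of_apply, hPdef] at e1 e2 ⊢
    rw [Fintype.sum_prod_type]
    calc ∑ b1, ∑ b2, star (V b1 x.1 * W b2 x.2) * (V b1 y.1 * W b2 y.2)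
        = (∑ b1, star (V b1 x.1) * V b1 y.1) * (∑ b2, star (W b2 x.2) * W b2 y.2) := by
          rw [Finset.sum_mul_sum]
          refine Finset.sum_congr rfl fun b1 _ => Finset.sum_congr rfl fun b2 _ => ?_
          simp only [star_mul']
          ring
      _ = (1 : Matrix (Fin m) (Fin m) ℂ) x.1 y.1 * (1 : Matrix (Fin n) (Fin n) ℂ) x.2 y.2 := by
          rw [e1, e2]
      _ = (1 : Matrix (Fin m × Fin n) (Fin m × Fin n) ℂ) x y := by
          simp only [Matrix.one_apply, Prod.ext_iff, mul_ite, mul_one, mul_zero, ite_and]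
          split_ifs <;> simp_all
  have hP2 : P * star P = 1 := mul_eq_one_comm.mp hP1
  set M : Matrix (Fin m × Fin n) (Fin m × Fin n) ℂ := star P * U with hMdef
  have hMstar : star M = star U * P := by rw [hMdef, star_mul, star_star]
  have hM1 : star M * M = 1 := by
    rw [hMstar, hMdef, mul_assoc, ← mul_assoc P, hP2, one_mul, hU1]
  have hM2 : M * star M = 1 := by
    rw [hMstar, hMdef, mul_assoc, ← mul_assoc U, hU2, one_mul, hP1]
  set c : (Fin m × Fin n) → (Fin m × Fin n) → ℝ := fun α x => Complex.normSq (M x α) with hcdef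
  set q : (Fin m × Fin n) → ℝ := fun x => a x.1 * b x.2 with hqdef
  set d : (Fin m × Fin n) → ℝ := fun x => ∑ α, p α * c α x with hddef
  have hc0 : ∀ α x, 0 ≤ c α x := fun α x => Complex.normSq_nonneg _
  have hp0 : ∀ α, 0 ≤ p α := hσ.eigenvalues_nonneg
  have ha0 : ∀ i, 0 ≤ a i := h1.eigenvalues_nonneg
  have hb0 : ∀ k, 0 ≤ b k := h2.eigenvalues_nonneg
  have hq0 : ∀ x, 0 ≤ q x := fun x => mul_nonneg (ha0 _) (hb0 _)
  have hrow : ∀ α, ∑ x, c α x = 1 := by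
    intro α
    have e := congrFun (congrFun hM1 α) α
    simp only [Matrix.mul_apply, Matrix.conjTranspose_apply, Matrix.star_apply,
      Matrix.one_apply_eq] at e
    apply Complex.ofReal_injective
    push_cast
    rw [← e]
    refine Finset.sum_congr rfl fun x _ => ?_
    rw [hcdef]
    simp [Complex.star_def, mul_comm, Complex.mul_conj]
  have hcol : ∀ x, ∑ α, c α x = 1 := by
    intro x
    have e := congrFun (congrFun hM2 x) x
    simp only [Matrix.mul_apply, Matrix.conjTranspose_apply, Matrix.star_apply,
      Matrix.one_apply_eq] at e
    apply Complex.ofReal_injective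
    push_cast
    rw [← e]
    refine Finset.sum_congr rfl fun α _ => ?_
    rw [hcdef]
    simp [Complex.star_def, Complex.mul_conj]
  have hspec : σ = U * Matrix.diagonal (RCLike.ofReal ∘ p) * star U := hA.spectral_theorem
  have hBd : ∀ x, (star P * σ * P) x x = ((d x : ℝ) : ℂ) := by
    intro x
    have hfact : star P * σ * P = M * Matrix.diagonal (RCLike.ofReal ∘ p) * star M := by
      rw [hspec, hMstar, hMdef]
      simp only [Matrix.mul_assoc]
    rw [hfact, Matrix.mul_apply]
    simp only [Matrix.mul_diagonal, Matrix.star_apply, Function.comp_apply]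
    rw [hddef]
    push_cast
    refine Finset.sum_congr rfl fun j _ => ?_
    rw [hcdef]
    simp only [Complex.star_def]
    rw [mul_comm (M x j), mul_assoc, Complex.mul_conj]
    norm_num
  have hWdelta : ∀ s t : Fin n, ∑ k, star (W s k) * W t k = if t = s then (1:ℂ) else 0 := by
    intro s t
    have e := congrFun (congrFun hW2 t) s
    simp only [Matrix.mul_apply, Matrix.star_apply, Matrix.one_apply] at e
    rw [← e]
    exact Finset.sum_congr rfl fun k _ => mul_comm _ _
  have hVdelta : ∀ s t : Fin m, ∑ i, star (V s i) * V t i = if t = s then (1:ℂ) else 0 := by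
    intro s t
    have e := congrFun (congrFun hV2 t) s
    simp only [Matrix.mul_apply, Matrix.star_apply, Matrix.one_apply] at e
    rw [← e]
    exact Finset.sum_congr rfl fun k _ => mul_comm _ _
  have hVd : star V * τ₁ * V = Matrix.diagonal (RCLike.ofReal ∘ a) := by
    rw [hVdef, hadef]
    have := h1.1.conjStarAlgAut_star_eigenvectorUnitary
    rw [Unitary.conjStarAlgAut_star_apply] at this
    exact this
  have hWd : star W * τ₂ * W = Matrix.diagonal (RCLike.ofReal ∘ b) := by
    rw [hWdef, hbdef]
    have := h2.1.conjStarAlgAut_star_eigenvectorUnitary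
    rw [Unitary.conjStarAlgAut_star_apply] at this
    exact this
  have hak : ∀ i, ∑ k, (star P * σ * P) (i, k) (i, k) = ((a i : ℝ) : ℂ) := by
    intro i
    have lhs_eq : ∑ k, (star P * σ * P) (i, k) (i, k)
        = ∑ b1, ∑ b2, ∑ c1, star (V b1 i) * σ (b1, b2) (c1, b2) * V c1 i := by
      calc ∑ k, (star P * σ * P) (i, k) (i, k)
          = ∑ k, ∑ γ : Fin m × Fin n, ∑ β : Fin m × Fin n,
              (star (V β.1 i) * star (W β.2 k) * σ β γ) * (V γ.1 i * W γ.2 k) := by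
            refine Finset.sum_congr rfl fun k _ => ?_
            simp only [Matrix.mul_apply, Matrix.star_apply, Matrix.of_apply, Finset.sum_mul]
            refine Finset.sum_congr rfl fun γ _ => Finset.sum_congr rfl fun β _ => ?_
            simp only [hPdef, Matrix.of_apply, star_mul']
            try ring
        _ = ∑ γ : Fin m × Fin n, ∑ β : Fin m × Fin n, ∑ k,
              (star (V β.1 i) * star (W β.2 k) * σ β γ) * (V γ.1 i * W γ.2 k) :=
            sum_rot _
        _ = ∑ β : Fin m × Fin n, ∑ γ : Fin m × Fin n,
              (star (V β.1 i) * σ β γ * V γ.1 i) * (if γ.2 = β.2 then (1:ℂ) else 0) := by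
            rw [sum_swap' (fun γ β => ∑ k,
              (star (V β.1 i) * star (W β.2 k) * σ β γ) * (V γ.1 i * W γ.2 k))]
            refine Finset.sum_congr rfl fun β _ => Finset.sum_congr rfl fun γ _ => ?_
            rw [← hWdelta β.2 γ.2, Finset.mul_sum]
            exact Finset.sum_congr rfl fun k _ => by ring
        _ = ∑ b1, ∑ b2, ∑ c1, ∑ c2, (star (V b1 i) * σ (b1, b2) (c1, c2) * V c1 i)
              * (if c2 = b2 then (1:ℂ) else 0) := by
            rw [Fintype.sum_prod_type]
            refine Finset.sum_congr rfl fun b1 _ => ?_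
            refine Finset.sum_congr rfl fun b2 _ => ?_
            rw [Fintype.sum_prod_type]
        _ = ∑ b1, ∑ b2, ∑ c1, star (V b1 i) * σ (b1, b2) (c1, b2) * V c1 i := by
            simp only [mul_ite, mul_one, mul_zero, Finset.sum_ite_eq', Finset.mem_univ, if_true]
    have rhs_eq : (star V * τ₁ * V) i i
        = ∑ c1, ∑ b1, ∑ b2, star (V b1 i) * σ (b1, b2) (c1, b2) * V c1 i := by
      simp only [Matrix.mul_apply, Matrix.star_apply, hτ₁, Matrix.of_apply, Finset.sum_mul,
        Finset.mul_sum]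
      try exact Finset.sum_congr rfl fun c1 _ => Finset.sum_congr rfl fun b1 _ =>
        Finset.sum_congr rfl fun b2 _ => by ring
    rw [lhs_eq, ← sum_rot (fun c1 b1 b2 => star (V b1 i) * σ (b1, b2) (c1, b2) * V c1 i),
      ← rhs_eq, hVd]
    simp [Matrix.diagonal_apply_eq]
  have hbk : ∀ k, ∑ i, (star P * σ * P) (i, k) (i, k) = ((b k : ℝ) : ℂ) := by
    intro k
    have lhs_eq : ∑ i, (star P * σ * P) (i, k) (i, k)
        = ∑ b1, ∑ b2, ∑ c2, star (W b2 k) * σ (b1, b2) (b1, c2) * W c2 k := by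
      calc ∑ i, (star P * σ * P) (i, k) (i, k)
          = ∑ i, ∑ γ : Fin m × Fin n, ∑ β : Fin m × Fin n,
              (star (W β.2 k) * star (V β.1 i) * σ β γ) * (W γ.2 k * V γ.1 i) := by
            refine Finset.sum_congr rfl fun i _ => ?_
            simp only [Matrix.mul_apply, Matrix.star_apply, Matrix.of_apply, Finset.sum_mul]
            refine Finset.sum_congr rfl fun γ _ => Finset.sum_congr rfl fun β _ => ?_
            simp only [hPdef, Matrix.of_apply, star_mul']
            try ring
        _ = ∑ γ : Fin m × Fin n, ∑ β : Fin m × Fin n, ∑ i,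
              (star (W β.2 k) * star (V β.1 i) * σ β γ) * (W γ.2 k * V γ.1 i) :=
            sum_rot _
        _ = ∑ β : Fin m × Fin n, ∑ γ : Fin m × Fin n,
              (star (W β.2 k) * σ β γ * W γ.2 k) * (if γ.1 = β.1 then (1:ℂ) else 0) := by
            rw [sum_swap' (fun γ β => ∑ i,
              (star (W β.2 k) * star (V β.1 i) * σ β γ) * (W γ.2 k * V γ.1 i))]
            refine Finset.sum_congr rfl fun β _ => Finset.sum_congr rfl fun γ _ => ?_
            rw [← hVdelta β.1 γ.1, Finset.mul_sum]
            exact Finset.sum_congr rfl fun i _ => by ring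
        _ = ∑ b1, ∑ b2, ∑ c1, ∑ c2, (star (W b2 k) * σ (b1, b2) (c1, c2) * W c2 k)
              * (if c1 = b1 then (1:ℂ) else 0) := by
            rw [Fintype.sum_prod_type]
            refine Finset.sum_congr rfl fun b1 _ => ?_
            refine Finset.sum_congr rfl fun b2 _ => ?_
            rw [Fintype.sum_prod_type]
        _ = ∑ b1, ∑ b2, ∑ c2, star (W b2 k) * σ (b1, b2) (b1, c2) * W c2 k := by
            refine Finset.sum_congr rfl fun b1 _ => Finset.sum_congr rfl fun b2 _ => ?_
            rw [Finset.sum_comm]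
            simp only [mul_ite, mul_one, mul_zero, Finset.sum_ite_eq', Finset.mem_univ, if_true]
    have rhs_eq : (star W * τ₂ * W) k k
        = ∑ c2, ∑ b2, ∑ b1, star (W b2 k) * σ (b1, b2) (b1, c2) * W c2 k := by
      simp only [Matrix.mul_apply, Matrix.star_apply, hτ₂, Matrix.of_apply, Finset.sum_mul,
        Finset.mul_sum]
      try exact Finset.sum_congr rfl fun c2 _ => Finset.sum_congr rfl fun b2 _ =>
        Finset.sum_congr rfl fun b1 _ => by ring
    have rot : ∑ c2, ∑ b2, ∑ b1, star (W b2 k) * σ (b1, b2) (b1, c2) * W c2 k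
        = ∑ b1, ∑ b2, ∑ c2, star (W b2 k) * σ (b1, b2) (b1, c2) * W c2 k := by
      rw [sum_rot (fun c2 b2 b1 => star (W b2 k) * σ (b1, b2) (b1, c2) * W c2 k)]
      rw [sum_swap' (fun b2 b1 => ∑ c2, star (W b2 k) * σ (b1, b2) (b1, c2) * W c2 k)]
    rw [lhs_eq, ← rot, ← rhs_eq, hWd]
    simp [Matrix.diagonal_apply_eq]
  have hda : ∀ i, ∑ k, d (i, k) = a i := by
    intro i
    apply Complex.ofReal_injective
    push_cast
    rw [← hak i]
    exact Finset.sum_congr rfl fun k _ => (hBd (i, k)).symm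
  have hdb : ∀ k, ∑ i, d (i, k) = b k := by
    intro k
    apply Complex.ofReal_injective
    push_cast
    rw [← hbk k]
    exact Finset.sum_congr rfl fun i _ => (hBd (i, k)).symm
  have hd0 : ∀ x, 0 ≤ d x :=
    fun x => Finset.sum_nonneg fun α _ => mul_nonneg (hp0 α) (hc0 α x)
  have hps : ∑ α, p α = 1 := by
    have e := trace_eq_sum_eigen σ hA
    rw [htr, ← hpdef] at e
    exact_mod_cast e.symm
  have htr1 : τ₁.trace = 1 := by
    rw [← htr, Matrix.trace, Matrix.trace, Fintype.sum_prod_type]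
    rfl
  have htr2 : τ₂.trace = 1 := by
    rw [← htr, Matrix.trace, Matrix.trace, Fintype.sum_prod_type]
    exact sum_swap' fun y x => σ.diag (x, y)
  have hsa : ∑ i, a i = 1 := by
    have e := trace_eq_sum_eigen τ₁ h1.1
    rw [htr1, ← hadef] at e
    exact_mod_cast e.symm
  have hsb : ∑ k, b k = 1 := by
    have e := trace_eq_sum_eigen τ₂ h2.1
    rw [htr2, ← hbdef] at e
    exact_mod_cast e.symm
  have hqs : ∑ x, q x = 1 := by
    rw [Fintype.sum_prod_type]
    simp only [hqdef]
    rw [← Finset.sum_mul_sum, hsa, hsb, mul_one]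
  have hsupp : ∀ α x, 0 < p α → q x = 0 → c α x = 0 := by
    intro α x hpα hqx
    have hdx : d x = 0 := by
      rcases mul_eq_zero.mp hqx with h0 | h0
      · have hle : d x ≤ ∑ k, d (x.1, k) := by
          have := Finset.single_le_sum (f := fun k => d (x.1, k))
            (fun k _ => hd0 _) (Finset.mem_univ x.2)
          simpa using this
        have : d x ≤ 0 := by rw [hda x.1, h0] at hle; exact hle
        exact le_antisymm this (hd0 x)
      · have hle : d x ≤ ∑ i, d (i, x.2) := by
          have := Finset.single_le_sum (f := fun i => d (i, x.2))
            (fun i _ => hd0 _) (Finset.mem_univ x.1)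
          simpa using this
        have : d x ≤ 0 := by rw [hdb x.2, h0] at hle; exact hle
        exact le_antisymm this (hd0 x)
    have hle : p α * c α x ≤ d x :=
      Finset.single_le_sum (f := fun β => p β * c β x)
        (fun β _ => mul_nonneg (hp0 β) (hc0 β x)) (Finset.mem_univ α)
    have h0 : p α * c α x = 0 :=
      le_antisymm (hdx ▸ hle) (mul_nonneg (hp0 α) (hc0 α x))
    rcases mul_eq_zero.mp h0 with h | h
    · exact absurd h (ne_of_gt hpα)
    · exact h
  have key := klein_core p q c hp0 hq0 hc0 hrow (fun x => (hcol x).le) hps hqs.le hsupp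
  have step2 : ∑ α, ∑ x, p α * c α x * Real.log (q x) = ∑ x, d x * Real.log (q x) := by
    rw [Finset.sum_comm]
    refine Finset.sum_congr rfl fun x _ => ?_
    rw [hddef, Finset.sum_mul]
  have step3 : ∑ x, d x * Real.log (q x)
      = ∑ x, (d x * Real.log (a x.1) + d x * Real.log (b x.2)) := by
    refine Finset.sum_congr rfl fun x _ => ?_
    rcases eq_or_lt_of_le (hd0 x) with h0 | hdx
    · rw [← h0]; ring
    · have hax : 0 < a x.1 := by
        rcases (ha0 x.1).lt_or_eq with h | h
        · exact h
        · exfalso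
          have hle : d x ≤ ∑ k, d (x.1, k) := by
            have := Finset.single_le_sum (f := fun k => d (x.1, k))
              (fun k _ => hd0 _) (Finset.mem_univ x.2)
            simpa using this
          rw [hda x.1, ← h] at hle
          linarith
      have hbx : 0 < b x.2 := by
        rcases (hb0 x.2).lt_or_eq with h | h
        · exact h
        · exfalso
          have hle : d x ≤ ∑ i, d (i, x.2) := by
            have := Finset.single_le_sum (f := fun i => d (i, x.2))
              (fun i _ => hd0 _) (Finset.mem_univ x.1)
            simpa using this
          rw [hdb x.2, ← h] at hle
          linarith
      rw [hqdef]
      show d x * Real.log (a x.1 * b x.2) = _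
      rw [Real.log_mul (ne_of_gt hax) (ne_of_gt hbx)]
      ring
  have step4 : ∑ x : Fin m × Fin n, d x * Real.log (a x.1) = ∑ i, a i * Real.log (a i) := by
    rw [Fintype.sum_prod_type]
    refine Finset.sum_congr rfl fun i _ => ?_
    show (∑ k, d (i, k) * Real.log (a i)) = a i * Real.log (a i)
    rw [← Finset.sum_mul, hda i]
  have step5 : ∑ x : Fin m × Fin n, d x * Real.log (b x.2) = ∑ k, b k * Real.log (b k) := by
    rw [Fintype.sum_prod_type, Finset.sum_comm]
    refine Finset.sum_congr rfl fun k _ => ?_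
    show (∑ i, d (i, k) * Real.log (b k)) = b k * Real.log (b k)
    rw [← Finset.sum_mul, hdb k]
  rw [step2, step3, Finset.sum_add_distrib, step4, step5] at key
  linarith
end

section
/- For every n ≥ 1 there exists a density matrix σ indexed by Fin n × Fin n such that H(σ) = 0 and its first partial trace σ₁ equals (1/n)·I, so that H(σ₁) = log n; hence the bound H(σ₁) - H(σ) ≤ log n is attained (optimality of the index bound, realized by a maximally entangled pure state). -/
open scoped ComplexOrder

lemma eig_idem {m : Type*} [Fintype m] [DecidableEq m] {A : Matrix m m ℂ}
    (hA : A.IsHermitian) (h : A * A = A) (i : m) :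
    hA.eigenvalues i = 0 ∨ hA.eigenvalues i = 1 := by
  set U : Matrix m m ℂ := (hA.eigenvectorUnitary : Matrix m m ℂ) with hU
  have hUU : U * star U = (1 : Matrix m m ℂ) := Unitary.coe_mul_star_self hA.eigenvectorUnitary
  have hD : star U * A * U = Matrix.diagonal (RCLike.ofReal ∘ hA.eigenvalues) := by
    have h0 := hA.conjStarAlgAut_star_eigenvectorUnitary
    rw [Unitary.conjStarAlgAut_star_apply] at h0
    exact h0
  have hd : Matrix.diagonal ((RCLike.ofReal ∘ hA.eigenvalues : m → ℂ)) *
      Matrix.diagonal ((RCLike.ofReal ∘ hA.eigenvalues : m → ℂ)) =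
      Matrix.diagonal ((RCLike.ofReal ∘ hA.eigenvalues : m → ℂ)) := by
    rw [← hD]
    have e1 : (star U * A * U) * (star U * A * U) = star U * (A * (U * star U) * A) * U := by
      noncomm_ring
    rw [e1, hUU, Matrix.mul_one, h]

  rw [Matrix.diagonal_mul_diagonal] at hd
  have := congr_fun (congr_fun hd i) i
  simp only [Matrix.diagonal_apply_eq, Pi.mul_apply, Function.comp_apply] at this
  have h2 : (hA.eigenvalues i) * (hA.eigenvalues i) = hA.eigenvalues i := by
    exact_mod_cast this
  have : hA.eigenvalues i * (hA.eigenvalues i - 1) = 0 := by ring_nf; linarith [h2]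
  rcases mul_eq_zero.mp this with h' | h'
  · exact Or.inl h'
  · exact Or.inr (by linarith)

lemma eig_smul_one {m : Type*} [Fintype m] [DecidableEq m] (c : ℝ)
    {A : Matrix m m ℂ} (hA : A.IsHermitian) (h : A = (c : ℂ) • 1) (i : m) :
    hA.eigenvalues i = c := by
  set U : Matrix m m ℂ := (hA.eigenvectorUnitary : Matrix m m ℂ) with hU
  have hUU : star U * U = (1 : Matrix m m ℂ) := Unitary.coe_star_mul_self hA.eigenvectorUnitary
  have hD : star U * A * U = Matrix.diagonal (RCLike.ofReal ∘ hA.eigenvalues) := by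
    have h0 := hA.conjStarAlgAut_star_eigenvectorUnitary
    rw [Unitary.conjStarAlgAut_star_apply] at h0
    exact h0
  have h2 : star U * A * U = (c : ℂ) • (1 : Matrix m m ℂ) := by
    have := congrArg (fun X => star U * X * U) h
    rw [this, Matrix.mul_smul, Matrix.mul_one, Matrix.smul_mul, hUU]
  have : (c : ℂ) • (1 : Matrix m m ℂ) = Matrix.diagonal ((RCLike.ofReal ∘ hA.eigenvalues : m → ℂ)) :=
    h2.symm.trans hD
  have := congr_fun (congr_fun this i) i
  simp only [Matrix.smul_apply, Matrix.one_apply_eq, Matrix.diagonal_apply_eq,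
    Function.comp_apply, smul_eq_mul, mul_one] at this
  have h3 : ((hA.eigenvalues i : ℝ) : ℂ) = ((c : ℝ) : ℂ) := this.symm
  exact_mod_cast h3

/-- Optimality of the bound `H(σ₁) - H(σ) ≤ log n`: there is a (maximally entangled, pure)
density matrix `σ` on `M_n ⊗ M_n` with `H(σ) = 0` whose first partial trace is the
normalized identity `(1/n) I`, of entropy `log n`. -/
theorem vNEntropy_bound_optimal (n : ℕ) (hn : 1 ≤ n) :
    ∃ σ : Matrix (Fin n × Fin n) (Fin n × Fin n) ℂ,
      σ.PosSemidef ∧ σ.trace = 1 ∧ vNEntropy σ = 0 ∧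
      (Matrix.of fun i j => ∑ k, σ (i, k) (j, k))
        = ((n : ℂ)⁻¹) • (1 : Matrix (Fin n) (Fin n) ℂ) ∧
      vNEntropy (Matrix.of fun i j => ∑ k, σ (i, k) (j, k)) = Real.log n := by
  classical
  have hn0 : (n : ℂ) ≠ 0 := Nat.cast_ne_zero.mpr (by omega)
  have hn0' : (n : ℝ) ≠ 0 := Nat.cast_ne_zero.mpr (by omega)
  set σ : Matrix (Fin n × Fin n) (Fin n × Fin n) ℂ :=
    Matrix.of (fun p q => if p.1 = p.2 ∧ q.1 = q.2 then (n : ℂ)⁻¹ else 0) with hσ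
  have key : ∀ c : ℂ, (∑ r : Fin n × Fin n, if r.1 = r.2 then c else 0) = n * c := by
    intro c
    rw [Fintype.sum_prod_type]
    simp [Finset.sum_ite_eq, Finset.card_univ, mul_comm]
  have hH : σ.IsHermitian := by
    refine Matrix.IsHermitian.ext fun p q => ?_
    simp only [hσ, Matrix.of_apply]
    split_ifs with h1 h2 h2 <;> simp_all [and_comm]
  have hmul : σ * σ = σ := by
    ext p q
    simp only [Matrix.mul_apply, hσ, Matrix.of_apply]
    have step : ∀ r : Fin n × Fin n,
        ((if p.1 = p.2 ∧ r.1 = r.2 then (n : ℂ)⁻¹ else 0) *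
          (if r.1 = r.2 ∧ q.1 = q.2 then (n : ℂ)⁻¹ else 0))
        = (if r.1 = r.2 then (if p.1 = p.2 ∧ q.1 = q.2 then (n:ℂ)⁻¹ * (n:ℂ)⁻¹ else 0) else 0) := by
      intro r
      split_ifs <;> simp_all
    rw [Finset.sum_congr rfl (fun r _ => step r), key]
    split_ifs with h
    · field_simp
    · simp
  have hPSD : σ.PosSemidef := by
    rw [Matrix.posSemidef_iff_dotProduct_mulVec]
    constructor
    · exact hH
    · intro x
      have hv : σ.mulVec x = fun p => if p.1 = p.2 then (n : ℂ)⁻¹ * ∑ k : Fin n, x (k, k) else 0 := by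
        funext p
        simp only [Matrix.mulVec, dotProduct, hσ, Matrix.of_apply]
        by_cases hp : p.1 = p.2
        · simp only [hp, true_and, ite_mul, zero_mul]
          rw [Finset.mul_sum, Fintype.sum_prod_type]
          simp [Finset.sum_ite_eq]
        · simp [hp]
      rw [hv]
      have : (dotProduct (star x) fun p =>
          if p.1 = p.2 then (n : ℂ)⁻¹ * ∑ k : Fin n, x (k, k) else 0)
          = (n : ℂ)⁻¹ * ((starRingEnd ℂ) (∑ k : Fin n, x (k, k)) * (∑ k : Fin n, x (k, k))) := by
        simp only [dotProduct, Pi.star_apply, mul_ite, mul_zero]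
        rw [Fintype.sum_prod_type]
        simp only [Finset.sum_ite_eq, Finset.mem_univ, if_true]
        simp only [Complex.star_def, map_sum, mul_assoc]
        rw [← Finset.sum_mul]
        ring
      rw [this, ← Complex.normSq_eq_conj_mul_self]
      have h1 : (0:ℂ) ≤ (n : ℂ)⁻¹ := by
        rw [← Complex.ofReal_natCast, ← Complex.ofReal_inv]
        exact_mod_cast inv_nonneg.mpr (by positivity : (0:ℝ) ≤ n)
      have h2 : (0:ℂ) ≤ ((Complex.normSq (∑ k : Fin n, x (k, k)) : ℝ) : ℂ) := by
        exact_mod_cast Complex.normSq_nonneg _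
      exact mul_nonneg h1 h2
  refine ⟨σ, hPSD, ?_, ?_, ?_, ?_⟩
  · -- trace
    simp only [Matrix.trace, Matrix.diag, hσ, Matrix.of_apply, and_self]
    rw [key]
    field_simp
  · -- entropy of σ
    rw [vNEntropy, dif_pos hH, neg_eq_zero]
    refine Finset.sum_eq_zero fun i _ => ?_
    rcases eig_idem hH hmul i with h' | h' <;> simp [h']
  · -- partial trace
    ext i j
    simp only [Matrix.of_apply, hσ, Matrix.smul_apply, smul_eq_mul]
    by_cases hij : i = j
    · subst hij
      simp [Finset.sum_ite_eq, Matrix.one_apply_eq]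
    · rw [Finset.sum_eq_zero, Matrix.one_apply_ne hij, mul_zero]
      intro k _
      rw [if_neg]
      rintro ⟨h1, h2⟩
      exact hij (h1.trans h2.symm)
  · -- entropy of partial trace
    have ht : (Matrix.of fun i j => ∑ k, σ (i, k) (j, k))
        = (((n : ℝ)⁻¹ : ℝ) : ℂ) • (1 : Matrix (Fin n) (Fin n) ℂ) := by
      ext i j
      simp only [Matrix.of_apply, hσ, Matrix.smul_apply, smul_eq_mul]
      push_cast
      by_cases hij : i = j
      · subst hij
        simp [Finset.sum_ite_eq, Matrix.one_apply_eq]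
      · rw [Finset.sum_eq_zero, Matrix.one_apply_ne hij, mul_zero]
        intro k _
        rw [if_neg]
        rintro ⟨h1, h2⟩
        exact hij (h1.trans h2.symm)
    have hH1 : (Matrix.of fun i j => ∑ k, σ (i, k) (j, k)).IsHermitian := by
      rw [ht]
      refine Matrix.IsHermitian.ext fun p q => ?_
      simp only [Matrix.conjTranspose_apply, Matrix.smul_apply, Matrix.one_apply, smul_eq_mul,
        mul_ite, mul_one, mul_zero, eq_comm]
      split_ifs <;> simp [map_inv₀]
    rw [vNEntropy, dif_pos hH1]
    have heig : ∀ i, hH1.eigenvalues i = (n : ℝ)⁻¹ := eig_smul_one _ hH1 ht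
    simp only [heig]
    rw [Finset.sum_const, Finset.card_univ, Fintype.card_fin]
    rw [Real.log_inv]
    rw [nsmul_eq_mul]
    field_simp
end
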